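/- For a probability space with an event Z of probability p^N (p ∈ (0,1], N ∈ ℕ) and an event A with P(A | Z) ≥ η > 0, one has P(A) ≥ η p^N; consequently, if a monotone bounded process has at each step such a conditional improvement structure, the process still converges in probability to within ε of its supremum even though only a fraction of coordinates update at each step. -/

import Mathlib

open MeasureTheory ProbabilityTheory Filter

/-- (a) If `P(Z) = p^N` and `P(A | Z) ≥ η`, then `P(A) ≥ η p^N`; (b) consequently, a
monotone process bounded by `fstar` whose conditional improvement probability outside
the ε-convergence region is at least `η p^N` (as obtained from such a conditional
structure at every step) still converges in probability into the ε-convergence region,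
even though only a fraction of the coordinates update at each step. -/
theorem asynchronous_scheme_converges
    {Ω : Type*} {m0 : MeasurableSpace Ω} (μ : Measure Ω) [IsProbabilityMeasure μ]
    (N : ℕ) (p η : ℝ) (hp : 0 < p) (hp1 : p ≤ 1) (hη : 0 < η) (hη1 : η ≤ 1)
    (Z A : Set Ω) (hZ : MeasurableSet Z) (hA : MeasurableSet A)
    (hZp : μ Z = ENNReal.ofReal p ^ N)
    (hcond : ENNReal.ofReal η ≤ (μ[|Z]) A)
    (ℱ : Filtration ℕ m0) (X : ℕ → Ω → ℝ) (hadap : Adapted ℱ X)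
    (fstar ε γ : ℝ) (hε : 0 < ε) (hγ : 0 < γ)
    (hmono : ∀ n, ∀ᵐ ω ∂μ, X n ω ≤ X (n + 1) ω)
    (hbdd : ∀ n, ∀ᵐ ω ∂μ, X n ω ≤ fstar)
    (hdrift : ∀ n, ∀ᵐ ω ∂μ, X n ω ≤ fstar - ε →
      η * p ^ N ≤ (μ[Set.indicator {ω' | γ ≤ X (n + 1) ω' - X n ω'}
        (fun _ => (1 : ℝ)) | ℱ n]) ω) :
    ENNReal.ofReal η * ENNReal.ofReal p ^ N ≤ μ A ∧
      Tendsto (fun n => (μ {ω | fstar - ε < X n ω}).toReal) atTop (nhds 1) := by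
  constructor
  · -- Part (a)
    have hZ0 : μ Z ≠ 0 := by
      rw [hZp]
      exact pow_ne_zero _ (by simpa using hp)
    rw [cond_apply hZ] at hcond
    calc ENNReal.ofReal η * ENNReal.ofReal p ^ N = ENNReal.ofReal η * μ Z := by rw [hZp]
      _ ≤ (μ Z)⁻¹ * μ (Z ∩ A) * μ Z := by gcongr
      _ = μ (Z ∩ A) * ((μ Z)⁻¹ * μ Z) := by ring
      _ = μ (Z ∩ A) := by
          rw [ENNReal.inv_mul_cancel hZ0 (measure_ne_top μ Z), mul_one]
      _ ≤ μ A := measure_mono Set.inter_subset_right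
  · -- Part (b)
    set c : ℝ := η * p ^ N with hc
    have hc0 : 0 < c := by positivity
    -- the improvement events, shifted so that `s n` is `ℱ n`-measurable
    set s : ℕ → Set Ω := fun n => match n with
      | 0 => (∅ : Set Ω)
      | k + 1 => {ω' | γ ≤ X (k + 1) ω' - X k ω'} with hs
    have hs_meas : ∀ n, MeasurableSet[ℱ n] (s n) := by
      intro n
      match n with
      | 0 => exact @MeasurableSet.empty _ (ℱ 0)
      | k + 1 =>
        have h1 : Measurable[ℱ (k + 1)] (X (k + 1)) := hadap (k + 1)
        have h2 : Measurable[ℱ (k + 1)] (X k) :=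
          (Measurable.mono (hadap k)) (ℱ.mono (Nat.le_succ k)) le_rfl
        exact measurableSet_le measurable_const (h1.sub h2)
    have hBC := tendsto_sum_indicator_atTop_iff' (μ := μ) (ℱ := ℱ) hs_meas
    have hmono' : ∀ᵐ ω ∂μ, ∀ n, X n ω ≤ X (n + 1) ω := ae_all_iff.2 hmono
    have hbdd' : ∀ᵐ ω ∂μ, ∀ n, X n ω ≤ fstar := ae_all_iff.2 hbdd
    have hdrift' : ∀ᵐ ω ∂μ, ∀ n, X n ω ≤ fstar - ε →
        c ≤ (μ[(s (n + 1)).indicator (1 : Ω → ℝ) | ℱ n]) ω := ae_all_iff.2 hdrift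
    -- a.e., the process eventually escapes the bad region
    have key : ∀ᵐ ω ∂μ, ∃ n, fstar - ε < X n ω := by
      filter_upwards [hBC, hmono', hbdd', hdrift'] with ω hiff hm hb hd
      by_contra h
      push_neg at h
      -- the predictable part diverges
      have hcond_sum : Tendsto (fun n => ∑ k ∈ Finset.range n,
          (μ[(s (k + 1)).indicator (1 : Ω → ℝ) | ℱ k]) ω) atTop atTop := by
        refine tendsto_atTop_mono (fun n => ?_)
          (tendsto_natCast_atTop_atTop.atTop_mul_const hc0)
        calc (n : ℝ) * c = ∑ _k ∈ Finset.range n, c := by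
              rw [Finset.sum_const, Finset.card_range, nsmul_eq_mul]
          _ ≤ ∑ k ∈ Finset.range n, (μ[(s (k + 1)).indicator (1 : Ω → ℝ) | ℱ k]) ω :=
            Finset.sum_le_sum fun k _ => hd k (h k)
      have hsum := hiff.2 hcond_sum
      -- but the sum of indicators is bounded
      have hbound : ∀ n, ∑ k ∈ Finset.range n, (s (k + 1)).indicator (1 : Ω → ℝ) ω
          ≤ (fstar - X 0 ω) / γ := by
        intro n
        rw [le_div_iff₀ hγ]
        have step : ∀ k, (s (k + 1)).indicator (1 : Ω → ℝ) ω * γ ≤ X (k + 1) ω - X k ω := by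
          intro k
          by_cases hk : ω ∈ s (k + 1)
          · simp only [Set.indicator_of_mem hk, Pi.one_apply, one_mul]
            exact hk
          · simp only [Set.indicator_of_notMem hk, zero_mul]
            exact sub_nonneg.2 (hm k)
        calc (∑ k ∈ Finset.range n, (s (k + 1)).indicator (1 : Ω → ℝ) ω) * γ
            = ∑ k ∈ Finset.range n, (s (k + 1)).indicator (1 : Ω → ℝ) ω * γ :=
              Finset.sum_mul ..
          _ ≤ ∑ k ∈ Finset.range n, (X (k + 1) ω - X k ω) :=
              Finset.sum_le_sum fun k _ => step k
          _ = X n ω - X 0 ω := Finset.sum_range_sub (fun k => X k ω) n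
          _ ≤ fstar - X 0 ω := by linarith [hb n]
      obtain ⟨n, hn⟩ := (hsum.eventually (eventually_gt_atTop ((fstar - X 0 ω) / γ))).exists
      exact absurd (hbound n) (not_le.2 hn)
    -- translate into convergence of measures
    set g : ℕ → Set Ω := fun n => {ω | fstar - ε < X n ω} with hg
    have hXmono : ∀ k n, k ≤ n → ∀ᵐ ω ∂μ, X k ω ≤ X n ω := by
      intro k n hkn
      filter_upwards [hmono'] with ω hm
      exact monotone_nat_of_le_succ (fun i => hm i) hkn
    have hgmono : ∀ k n, k ≤ n → g k ≤ᵐ[μ] g n := by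
      intro k n hkn
      filter_upwards [hXmono k n hkn] with ω hm hk
      exact lt_of_lt_of_le hk hm
    have hacc : ∀ n, μ (g n) = μ (Set.accumulate g n) := by
      intro n
      refine le_antisymm (measure_mono (Set.subset_accumulate)) (measure_mono_ae ?_)
      have : ∀ᵐ ω ∂μ, ∀ k ≤ n, ω ∈ g k → ω ∈ g n := by
        rw [ae_all_iff]
        intro k
        rw [ae_all_iff]
        intro hk
        exact hgmono k n hk
      filter_upwards [this] with ω hw hacc
      obtain ⟨k, hk, hgk⟩ := Set.mem_accumulate.1 hacc
      exact hw k hk hgk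
    have hunion : μ (⋃ n, g n) = 1 := by
      refine le_antisymm prob_le_one ?_
      have : (Set.univ : Set Ω) ≤ᵐ[μ] ⋃ n, g n := by
        filter_upwards [key] with ω hw _
        obtain ⟨n, hn⟩ := hw
        exact Set.mem_iUnion.2 ⟨n, hn⟩
      simpa using measure_mono_ae this
    have hconv : Tendsto (fun n => μ (g n)) atTop (nhds 1) := by
      have := tendsto_measure_iUnion_accumulate (μ := μ) (f := g)
      rw [hunion] at this
      exact this.congr fun n => (hacc n).symm
    have := (ENNReal.tendsto_toReal ENNReal.one_ne_top).comp hconv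
    exact this
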